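/- arXiv:0905.3514 — 4 statements merged into one kernel-verified Lean document; each statement's English description precedes it below -/
import Mathlib

section
/- Let K and L be compact convex sets in ℝⁿ with nonempty interiors. Suppose that for every n-simplex T ⊆ K (a convex hull of n+1 affinely independent points, all lying in K), there exists v ∈ ℝⁿ with T + v ⊆ L. Then there exists v₀ ∈ ℝⁿ such that K + v₀ ⊆ L. -/
open Set

/-- The orthogonal projection of `ℝⁿ` onto a subspace `ξ`, viewed as a map `ℝⁿ → ℝⁿ`. -/
noncomputable def projSub {n : ℕ} (ξ : Submodule ℝ (EuclideanSpace ℝ (Fin n)))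
    (x : EuclideanSpace ℝ (Fin n)) : EuclideanSpace ℝ (Fin n) :=
  (ξ.orthogonalProjection x : EuclideanSpace ℝ (Fin n))

/-- The orthogonal projection of `ℝⁿ` onto the hyperplane `u^⊥`. -/
noncomputable def projHyp {n : ℕ} (u : EuclideanSpace ℝ (Fin n)) :
    EuclideanSpace ℝ (Fin n) → EuclideanSpace ℝ (Fin n) :=
  projSub ((Submodule.span ℝ {u})ᗮ)

/-- `IsSimplex n Δ` : `Δ` is an `n`-simplex in `ℝⁿ`, i.e. the convex hull of
`n+1` affinely independent points. -/
def IsSimplex (n : ℕ) (Δ : Set (EuclideanSpace ℝ (Fin n))) : Prop :=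
  ∃ p : Fin (n + 1) → EuclideanSpace ℝ (Fin n),
    AffineIndependent ℝ p ∧ Δ = convexHull ℝ (Set.range p)

section AuxiliaryLemmas
open Polynomial Matrix

/-- Affine independence via a determinant. -/
lemma affInd_iff_det {n : ℕ} (y : Fin (n+1) → EuclideanSpace ℝ (Fin n)) :
    AffineIndependent ℝ y ↔
      (Matrix.of fun i j : Fin n => (y i.succ - y 0) j).det ≠ 0 := by
  rw [affineIndependent_iff_linearIndependent_vsub ℝ y 0,
      ← linearIndependent_equiv (finSuccAboveEquiv (0 : Fin (n+1))),
      ← isUnit_iff_ne_zero, ← Matrix.isUnit_iff_isUnit_det,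
      ← Matrix.linearIndependent_rows_iff_isUnit]
  have : ((fun x : {x : Fin (n+1) // x ≠ 0} => y x -ᵥ y 0) ∘ (finSuccAboveEquiv (0 : Fin (n+1))))
      = (WithLp.linearEquiv 2 ℝ (Fin n → ℝ)).symm ∘ fun i : Fin n => (Matrix.of fun i j : Fin n => (y i.succ - y 0) j) i := by
    funext i
    simp [finSuccAboveEquiv_apply, Fin.succAbove, vsub_eq_sub]
    rfl
  rw [this]
  exact ⟨fun h => h.map' (WithLp.linearEquiv 2 ℝ (Fin n → ℝ)).toLinearMap (LinearEquiv.ker _), fun h => h.map' _ (LinearEquiv.ker _)⟩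

/-- Any nonempty open set in ℝⁿ contains an affinely independent (n+1)-tuple. -/
lemma exists_affInd_mem_open {n : ℕ} {u : Set (EuclideanSpace ℝ (Fin n))} (hu : IsOpen u)
    (hne : u.Nonempty) :
    ∃ a : Fin (n+1) → EuclideanSpace ℝ (Fin n), AffineIndependent ℝ a ∧ ∀ i, a i ∈ u := by
  obtain ⟨b⟩ := AffineBasis.exists_affineBasis_of_finiteDimensional
      (ι := Fin (n+1)) (k := ℝ) (V := EuclideanSpace ℝ (Fin n))
      (P := EuclideanSpace ℝ (Fin n))
      (by simp [finrank_euclideanSpace_fin])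
  obtain ⟨c, hc⟩ := hne
  obtain ⟨r, hr, hball⟩ := Metric.isOpen_iff.1 hu c hc
  -- translate the basis so that its 0-th point is c
  set b' : Fin (n+1) → EuclideanSpace ℝ (Fin n) := fun i => b i + (c - b 0) with hb'
  have hb'0 : b' 0 = c := by simp [hb']
  have hb'ind : AffineIndependent ℝ b' := by
    have h2 : AffineIndependent ℝ
        (((AffineEquiv.constVAdd ℝ (EuclideanSpace ℝ (Fin n)) (c - b 0)).toAffineMap) ∘ b) :=
      b.ind.map' _ (AffineEquiv.constVAdd ℝ _ (c - b 0)).injective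
    convert h2 using 2 with i
    simp only [AffineEquiv.coe_toAffineMap, AffineEquiv.constVAdd_apply, Function.comp]
    funext i
    simp [b', add_comm]
  set M : ℝ := (Finset.univ.sup' Finset.univ_nonempty fun i => dist c (b' i)) + 1 with hM
  have hM0 : 0 < M := by
    have : (0:ℝ) ≤ Finset.univ.sup' Finset.univ_nonempty fun i => dist c (b' i) :=
      le_trans dist_nonneg (Finset.le_sup' (fun i => dist c (b' i)) (Finset.mem_univ 0))
    linarith
  set δ : ℝ := r / (2 * M) with hδ
  have hδ0 : 0 < δ := by positivity
  refine ⟨fun i => AffineMap.lineMap (b' 0) (b' i) δ, ?_, ?_⟩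
  · exact hb'ind.units_lineMap 0 fun _ => Units.mk0 δ hδ0.ne'
  · intro i
    apply hball
    rw [Metric.mem_ball, hb'0]
    calc dist (AffineMap.lineMap c (b' i) δ) c = ‖δ‖ * dist c (b' i) := dist_lineMap_left _ _ _
    _ ≤ δ * M := by
        rw [Real.norm_eq_abs, abs_of_pos hδ0]
        apply mul_le_mul_of_nonneg_left _ hδ0.le
        rw [hM]
        have := Finset.le_sup' (fun i => dist c (b' i)) (Finset.mem_univ i)
        linarith
    _ < r := by
        have hMM : δ * M = r / 2 := by
          rw [hδ]; field_simp
        rw [hMM]; linarith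

/-- Perturbation: points of K can be approximated by affinely independent points of K. -/
lemma exists_affInd_approx {n : ℕ} {K : Set (EuclideanSpace ℝ (Fin n))} (hKcv : Convex ℝ K)
    (hKint : (interior K).Nonempty) (x : Fin (n+1) → EuclideanSpace ℝ (Fin n))
    (hx : ∀ i, x i ∈ K) {ε : ℝ} (hε : 0 < ε) :
    ∃ y : Fin (n+1) → EuclideanSpace ℝ (Fin n),
      AffineIndependent ℝ y ∧ (∀ i, y i ∈ K) ∧ ∀ i, dist (y i) (x i) < ε := by
  obtain ⟨a, haind, haK⟩ := exists_affInd_mem_open isOpen_interior hKint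
  set C : ℝ := (Finset.univ.sup' Finset.univ_nonempty fun i => ‖a i - x i‖) + 1 with hC
  have hC0 : 0 < C := by
    have : (0:ℝ) ≤ Finset.univ.sup' Finset.univ_nonempty fun i => ‖a i - x i‖ :=
      le_trans (norm_nonneg _) (Finset.le_sup' (fun i => ‖a i - x i‖) (Finset.mem_univ 0))
    linarith
  set P : Matrix (Fin n) (Fin n) (Polynomial ℝ) :=
    Matrix.of (fun i j => Polynomial.C ((x i.succ - x 0) j)
      + Polynomial.X * Polynomial.C (((a i.succ - x i.succ) - (a 0 - x 0)) j)) with hPdef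
  have hmap : ∀ t : ℝ, P.map (Polynomial.evalRingHom t) =
      Matrix.of fun i j =>
        ((x i.succ + t • (a i.succ - x i.succ)) - (x 0 + t • (a 0 - x 0))) j := by
    intro t
    ext i j
    simp only [hPdef, Matrix.map_apply, Matrix.of_apply, map_add, _root_.map_mul,
      Polynomial.eval_C, Polynomial.eval_X, Polynomial.eval_mul, Polynomial.eval_add,
      _root_.map_mul,
      Polynomial.coe_evalRingHom]
    simp only [PiLp.sub_apply, PiLp.add_apply, PiLp.smul_apply, smul_eq_mul]
    ring
  have hP : P.det ≠ 0 := by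
    intro h0
    have h1 : (P.map (Polynomial.evalRingHom (1:ℝ))).det = 0 := by
      rw [← RingHom.mapMatrix_apply, ← RingHom.map_det, h0, map_zero]
    rw [hmap 1] at h1
    refine (affInd_iff_det a).1 haind ?_
    rw [← h1]
    congr 1
    ext i j
    simp only [Matrix.of_apply, one_smul, PiLp.sub_apply, PiLp.add_apply]
    ring
  obtain ⟨t, htmem, htroot⟩ : ∃ t, t ∈ Set.Ioc (0:ℝ) (min 1 (ε / (2*C)))
      ∧ ¬ P.det.IsRoot t := by
    have hinf : (Set.Ioc (0:ℝ) (min 1 (ε/(2*C)))).Infinite :=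
      Set.Ioc_infinite (lt_min one_pos (by positivity))
    obtain ⟨t, ht⟩ := (hinf.diff (Polynomial.finite_setOf_isRoot hP)).nonempty
    exact ⟨t, ht.1, ht.2⟩
  obtain ⟨ht0, htle⟩ := htmem
  have ht1 : t ≤ 1 := le_trans htle (min_le_left _ _)
  have htε : t ≤ ε / (2*C) := le_trans htle (min_le_right _ _)
  refine ⟨fun i => x i + t • (a i - x i), ?_, ?_, ?_⟩
  · rw [affInd_iff_det]
    have hdet : Polynomial.eval t P.det = (Matrix.of fun i j : Fin n =>
        ((x i.succ + t • (a i.succ - x i.succ)) - (x 0 + t • (a 0 - x 0))) j).det := by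
      rw [show Polynomial.eval t P.det = (Polynomial.evalRingHom t) P.det from rfl,
        RingHom.map_det, RingHom.mapMatrix_apply, hmap t]
    intro h0
    exact htroot (hdet.trans h0)
  · intro i
    show x i + t • (a i - x i) ∈ K
    have heq : x i + t • (a i - x i) = (1 - t) • x i + t • a i := by module
    rw [heq]
    exact hKcv (hx i) (interior_subset (haK i)) (by linarith) ht0.le (by ring)
  · intro i
    have : dist (x i + t • (a i - x i)) (x i) = t * ‖a i - x i‖ := by
      rw [dist_eq_norm, add_sub_cancel_left, norm_smul, Real.norm_eq_abs, abs_of_pos ht0]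
    rw [this]
    have hai : ‖a i - x i‖ ≤ C := by
      have := Finset.le_sup' (fun i => ‖a i - x i‖) (Finset.mem_univ i)
      rw [hC]; linarith
    have hCeq : (ε / (2*C)) * C = ε / 2 := by field_simp
    calc t * ‖a i - x i‖ ≤ (ε / (2*C)) * C :=
          mul_le_mul htε hai (norm_nonneg _) (by positivity)
      _ = ε / 2 := hCeq
      _ < ε := by linarith

lemma key_translate {n : ℕ} {K L : Set (EuclideanSpace ℝ (Fin n))}
    (hKcp : IsCompact K) (hKcv : Convex ℝ K) (hKint : (interior K).Nonempty)
    (hLcp : IsCompact L)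
    (h : ∀ T : Set (EuclideanSpace ℝ (Fin n)),
      (∃ p : Fin (n + 1) → EuclideanSpace ℝ (Fin n),
        AffineIndependent ℝ p ∧ (∀ i, p i ∈ K) ∧ T = convexHull ℝ (Set.range p)) →
      ∃ v : EuclideanSpace ℝ (Fin n), (fun x => x + v) '' T ⊆ L)
    (x : Fin (n+1) → EuclideanSpace ℝ (Fin n)) (hx : ∀ i, x i ∈ K) :
    ∃ v, ∀ i, x i + v ∈ L := by
  have pert : ∀ k : ℕ, ∃ y : Fin (n+1) → EuclideanSpace ℝ (Fin n),
      AffineIndependent ℝ y ∧ (∀ i, y i ∈ K) ∧ ∀ i, dist (y i) (x i) < 1/(k+1) :=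
    fun k => exists_affInd_approx hKcv hKint x hx (by positivity)
  choose y hind hyK hclose using pert
  have hv : ∀ k : ℕ, ∃ v, ∀ i, y k i + v ∈ L := by
    intro k
    obtain ⟨v, hv⟩ := h (convexHull ℝ (Set.range (y k))) ⟨y k, hind k, hyK k, rfl⟩
    exact ⟨v, fun i => hv ⟨y k i, subset_convexHull ℝ _ (Set.mem_range_self i), rfl⟩⟩
  choose v hvL using hv
  obtain ⟨R, hR⟩ := hLcp.isBounded.subset_closedBall 0
  obtain ⟨R', hR'⟩ := hKcp.isBounded.subset_closedBall 0
  have hvb : ∀ k, v k ∈ Metric.closedBall (0 : EuclideanSpace ℝ (Fin n)) (R + R') := by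
    intro k
    have h1 : ‖y k 0 + v k‖ ≤ R := by
      simpa [Metric.mem_closedBall, dist_eq_norm] using hR (hvL k 0)
    have h2 : ‖y k 0‖ ≤ R' := by
      simpa [Metric.mem_closedBall, dist_eq_norm] using hR' (hyK k 0)
    have : v k = (y k 0 + v k) - y k 0 := by abel
    rw [Metric.mem_closedBall, dist_eq_norm, sub_zero, this]
    exact le_trans (norm_sub_le _ _) (by linarith)
  obtain ⟨w, -, φ, hφ, hw⟩ := tendsto_subseq_of_bounded Metric.isBounded_closedBall hvb
  refine ⟨w, fun i => ?_⟩
  have hyt : Filter.Tendsto (fun k => y (φ k) i) Filter.atTop (nhds (x i)) := by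
    rw [tendsto_iff_dist_tendsto_zero]
    apply squeeze_zero (fun _ => dist_nonneg) (fun k => ?_)
      tendsto_one_div_add_atTop_nhds_zero_nat
    calc dist (y (φ k) i) (x i) ≤ 1/(φ k + 1) := (hclose (φ k) i).le
      _ ≤ 1/(k + 1) := by
          apply one_div_le_one_div_of_le (by positivity)
          have h3 : (k:ℝ) ≤ φ k := Nat.cast_le.2 hφ.le_apply
          linarith
  have htend : Filter.Tendsto (fun k => y (φ k) i + v (φ k)) Filter.atTop (nhds (x i + w)) :=
    hyt.add hw
  exact hLcp.isClosed.mem_of_tendsto htend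
    (Filter.Eventually.of_forall fun k => hvL (φ k) i)


end AuxiliaryLemmas

/-- Inscribed simplex containment for bodies with non-empty interiors. -/
theorem stmt_2 {n : ℕ} (hn : 1 ≤ n) (K L : Set (EuclideanSpace ℝ (Fin n)))
    (hKcp : IsCompact K) (hKcv : Convex ℝ K) (hKint : (interior K).Nonempty)
    (hLcp : IsCompact L) (hLcv : Convex ℝ L) (hLint : (interior L).Nonempty)
    (h : ∀ T : Set (EuclideanSpace ℝ (Fin n)),
      (∃ p : Fin (n + 1) → EuclideanSpace ℝ (Fin n),
        AffineIndependent ℝ p ∧ (∀ i, p i ∈ K) ∧ T = convexHull ℝ (Set.range p)) →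
      ∃ v : EuclideanSpace ℝ (Fin n), (fun x => x + v) '' T ⊆ L) :
    ∃ v₀ : EuclideanSpace ℝ (Fin n), (fun x => x + v₀) '' K ⊆ L := by
  classical
  set F : K → Set (EuclideanSpace ℝ (Fin n)) := fun p => {v | (p : EuclideanSpace ℝ (Fin n)) + v ∈ L}
    with hF
  have hFeq : ∀ p : K, F p = (fun w => w - (p : EuclideanSpace ℝ (Fin n))) '' L := by
    intro p
    ext v
    constructor
    · intro hv
      exact ⟨(p : EuclideanSpace ℝ (Fin n)) + v, hv, add_sub_cancel_left _ _⟩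
    · rintro ⟨w, hw, rfl⟩
      show (p : EuclideanSpace ℝ (Fin n)) + (w - p) ∈ L
      simpa [add_sub_cancel] using hw
  have hFcv : ∀ p : K, Convex ℝ (F p) := fun p => hLcv.translate_preimage_right _
  have hFcp : ∀ p : K, IsCompact (F p) := by
    intro p
    rw [hFeq p]
    exact hLcp.image (continuous_id.sub continuous_const)
  have hinter : ∀ I : Finset K,
      I.card ≤ Module.finrank ℝ (EuclideanSpace ℝ (Fin n)) + 1 → (⋂ p ∈ I, F p).Nonempty := by
    intro I hcard
    rw [finrank_euclideanSpace_fin] at hcard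
    rcases I.eq_empty_or_nonempty with rfl | ⟨d, hd⟩
    · simp
    · set l := I.toList with hl
      have hlen : l.length ≤ n + 1 := by
        rw [hl, Finset.length_toList]; exact hcard
      set xs : Fin (n+1) → K := fun i => l.getD i.val d with hxs
      obtain ⟨v, hv⟩ := key_translate hKcp hKcv hKint hLcp h (fun i => (xs i : EuclideanSpace ℝ (Fin n)))
        (fun i => (xs i).2)
      refine ⟨v, ?_⟩
      rw [Set.mem_iInter₂]
      intro p hp
      have hpl : p ∈ l := by rw [hl]; exact Finset.mem_toList.2 hp
      obtain ⟨m, hm, hmp⟩ := List.mem_iff_getElem.1 hpl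
      have hmn : m < n + 1 := lt_of_lt_of_le hm hlen
      have hxm : xs ⟨m, hmn⟩ = p := by
        rw [hxs]
        simp only []
        rw [List.getD_eq_getElem l d hm]
        exact hmp
      have := hv ⟨m, hmn⟩
      rw [hxm] at this
      exact this
  obtain ⟨v, hv⟩ := Convex.helly_theorem_compact' (𝕜 := ℝ) hFcv hFcp hinter
  refine ⟨v, ?_⟩
  rintro _ ⟨z, hz, rfl⟩
  exact Set.mem_iInter.1 hv ⟨z, hz⟩
end

section
/- Let L be a nonempty compact convex set in ℝⁿ, and let Q be a polytope in ℝⁿ having at most n vertices (the convex hull of at most n points). Suppose that for every unit vector u ∈ ℝⁿ there exists v ∈ u^⊥ such that Q_u + v ⊆ L_u, where Q_u and L_u denote the orthogonal projections of Q and L onto the hyperplane u^⊥. Then there exists v₀ ∈ ℝⁿ such that Q + v₀ ⊆ L. -/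
open Set

lemma inner_projHyp {n : ℕ} (u : EuclideanSpace ℝ (Fin n))
    (b : EuclideanSpace ℝ (Fin n)) (hb : b ∈ (Submodule.span ℝ {u})ᗮ)
    (y : EuclideanSpace ℝ (Fin n)) :
    (inner ℝ b y : ℝ) = inner ℝ b (projHyp u y) := by
  have hmem : y - projHyp u y ∈ ((Submodule.span ℝ {u})ᗮ)ᗮ :=
    Submodule.sub_starProjection_mem_orthogonal (K := (Submodule.span ℝ {u})ᗮ) y
  have h0 : (inner ℝ b (y - projHyp u y) : ℝ) =
      0 := Submodule.inner_right_of_mem_orthogonal hb hmem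
  rw [inner_sub_right] at h0
  linarith

/-- Shadow covering by a convex body of a polytope with at most n vertices. -/
theorem stmt_5 {n : ℕ} (hn : 1 ≤ n) (L Q : Set (EuclideanSpace ℝ (Fin n)))
    (hLne : L.Nonempty) (hLcp : IsCompact L) (hLcv : Convex ℝ L)
    (hQ : ∃ s : Finset (EuclideanSpace ℝ (Fin n)), s.card ≤ n ∧
      Q = convexHull ℝ (↑s : Set (EuclideanSpace ℝ (Fin n))))
    (h : ∀ u : EuclideanSpace ℝ (Fin n), ‖u‖ = 1 →
      ∃ v ∈ (Submodule.span ℝ {u})ᗮ,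
        (fun x => x + v) '' (projHyp u '' Q) ⊆ projHyp u '' L) :
    ∃ v₀ : EuclideanSpace ℝ (Fin n), (fun x => x + v₀) '' Q ⊆ L := by
  classical
  obtain ⟨s, hcard, hQs⟩ := hQ
  -- key claim: a common translate works for all vertices
  have key : ∃ v₀ : EuclideanSpace ℝ (Fin n), ∀ p ∈ s, p + v₀ ∈ L := by
    by_contra hcon
    push_neg at hcon
    set ι := {p : EuclideanSpace ℝ (Fin n) // p ∈ s} with hι
    -- the translated bodies
    set C : ι → Set (EuclideanSpace ℝ (Fin n)) :=
      fun p => (fun l => l - (p : EuclideanSpace ℝ (Fin n))) '' L with hC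
    have hCmem : ∀ (p : ι) (v : EuclideanSpace ℝ (Fin n)),
        v ∈ C p ↔ (p : EuclideanSpace ℝ (Fin n)) + v ∈ L := by
      intro p v
      constructor
      · rintro ⟨l, hl, rfl⟩
        rwa [add_sub_cancel]
      · intro hv
        exact ⟨(p : EuclideanSpace ℝ (Fin n)) + v, hv, add_sub_cancel_left _ _⟩
    have hCcp : ∀ p : ι, IsCompact (C p) :=
      fun p => hLcp.image (continuous_sub_right _)
    have hCcv : ∀ p : ι, Convex ℝ (C p) := by
      intro p
      have heq : (fun l : EuclideanSpace ℝ (Fin n) => l - (p : EuclideanSpace ℝ (Fin n))) =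
          (fun l => (-(p : EuclideanSpace ℝ (Fin n))) + l) := by
        funext l; rw [sub_eq_neg_add]
      simp only [hC, heq]
      exact hLcv.translate _
    -- the product set
    set T : Set (ι → EuclideanSpace ℝ (Fin n)) := Set.univ.pi C with hT
    have hTcp : IsCompact T := isCompact_univ_pi hCcp
    have hTcv : Convex ℝ T := convex_pi (fun p _ => hCcv p)
    -- the diagonal submodule
    set D : Submodule ℝ (ι → EuclideanSpace ℝ (Fin n)) :=
      LinearMap.range (LinearMap.pi
        (fun _ : ι => (LinearMap.id : EuclideanSpace ℝ (Fin n) →ₗ[ℝ] EuclideanSpace ℝ (Fin n))))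
      with hD
    have hDmem : ∀ y : EuclideanSpace ℝ (Fin n), (fun _ : ι => y) ∈ D := fun y => ⟨y, rfl⟩
    have hDcl : IsClosed (D : Set (ι → EuclideanSpace ℝ (Fin n))) :=
      Submodule.closed_of_finiteDimensional D
    have hDcv : Convex ℝ (D : Set (ι → EuclideanSpace ℝ (Fin n))) := D.convex
    have hdisj : Disjoint (D : Set (ι → EuclideanSpace ℝ (Fin n))) T := by
      rw [Set.disjoint_left]
      rintro x ⟨y, rfl⟩ hxT
      obtain ⟨p, hps, hpL⟩ := hcon y
      have hm := hxT ⟨p, hps⟩ (Set.mem_univ _)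
      rw [hCmem] at hm
      exact hpL hm
    obtain ⟨f, α, β, hα, hαβ, hβ⟩ :=
      geometric_hahn_banach_closed_compact hDcv hDcl hTcv hTcp hdisj
    -- f vanishes on the diagonal
    have h0 : ∀ y : EuclideanSpace ℝ (Fin n), f (fun _ : ι => y) = 0 := by
      intro y
      by_contra hne
      set c := f (fun _ : ι => y) with hc
      have hmem : ((α + 1) / c) • (fun _ : ι => y) ∈
          (D : Set (ι → EuclideanSpace ℝ (Fin n))) := by
        have heq : (((α + 1) / c) • fun _ : ι => y) = fun _ : ι => ((α + 1) / c) • y := rfl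
        rw [heq]; exact hDmem _
      have := hα _ hmem
      rw [map_smul, smul_eq_mul, ← hc, div_mul_cancel₀ _ hne] at this
      linarith
    have hα0 : 0 < α := by
      have := hα 0 (Submodule.zero_mem D)
      rw [map_zero] at this; linarith
    -- decompose f via vectors a p
    set a : ι → EuclideanSpace ℝ (Fin n) := fun p =>
      (InnerProductSpace.toDual ℝ (EuclideanSpace ℝ (Fin n))).symm
        (f.comp (LinearMap.single ℝ (fun _ : ι => EuclideanSpace ℝ (Fin n))
          p).toContinuousLinearMap) with ha
    have hainner : ∀ (p : ι) (y : EuclideanSpace ℝ (Fin n)),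
        (inner ℝ (a p) y : ℝ) = f (Pi.single p y) := by
      intro p y
      rw [ha]
      rw [InnerProductSpace.toDual_symm_apply]
      rfl
    have hsum : ∀ x : ι → EuclideanSpace ℝ (Fin n),
        f x = ∑ p : ι, (inner ℝ (a p) (x p) : ℝ) := by
      intro x
      have hx : x = ∑ p : ι, Pi.single p (x p) := (Finset.univ_sum_single x).symm
      conv_lhs => rw [hx]
      rw [map_sum]
      exact Finset.sum_congr rfl (fun p _ => (hainner p (x p)).symm)
    have ha0 : ∑ p : ι, a p = 0 := by
      rw [← inner_self_eq_zero (𝕜 := ℝ)]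
      rw [sum_inner]
      have hz := hsum (fun _ : ι => ∑ p : ι, a p)
      rw [h0] at hz
      linarith [hz]
    -- find a unit vector orthogonal to all a p
    obtain ⟨p₀, hp₀s, -⟩ := hcon 0
    set q₀ : ι := ⟨p₀, hp₀s⟩ with hq₀
    set t : Finset (EuclideanSpace ℝ (Fin n)) := (Finset.univ.erase q₀).image a with ht
    set W : Submodule ℝ (EuclideanSpace ℝ (Fin n)) :=
      Submodule.span ℝ (t : Set (EuclideanSpace ℝ (Fin n))) with hW
    have hWa' : ∀ p : ι, p ≠ q₀ → a p ∈ W := by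
      intro p hp
      exact Submodule.subset_span (by
        simp only [ht, Finset.coe_image, Set.mem_image]
        exact ⟨p, by simp [Finset.mem_erase, hp], rfl⟩)
    have hWa : ∀ p : ι, a p ∈ W := by
      intro p
      by_cases hp : p = q₀
      · rw [hp]
        have hsum' : a q₀ + ∑ q ∈ Finset.univ.erase q₀, a q = ∑ q : ι, a q :=
          Finset.add_sum_erase _ _ (Finset.mem_univ q₀)
        rw [ha0] at hsum'
        have heq : a q₀ = -∑ q ∈ Finset.univ.erase q₀, a q := by
          rw [eq_neg_iff_add_eq_zero]; exact hsum'
        rw [heq]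
        exact W.neg_mem (Submodule.sum_mem _ (fun q hq =>
          hWa' q (Finset.ne_of_mem_erase hq)))
      · exact hWa' p hp
    have hrank : Module.finrank ℝ W < n := by
      have h1 : Module.finrank ℝ W ≤ t.card := finrank_span_finset_le_card t
      have h2 : t.card ≤ (Finset.univ.erase q₀).card := Finset.card_image_le
      have h3 : (Finset.univ.erase q₀).card = Fintype.card ι - 1 := by
        rw [Finset.card_erase_of_mem (Finset.mem_univ _), Finset.card_univ]
      have h4 : Fintype.card ι = s.card := Fintype.card_coe s
      have h5 : 1 ≤ s.card := Finset.card_pos.2 ⟨p₀, hp₀s⟩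
      omega
    have hWne : W ≠ ⊤ := by
      intro hWtop
      rw [hWtop] at hrank
      have hfr : Module.finrank ℝ
          (⊤ : Submodule ℝ (EuclideanSpace ℝ (Fin n))) = n := by
        rw [finrank_top]
        exact finrank_euclideanSpace_fin
      omega
    have hWbot : Wᗮ ≠ ⊥ := by
      simp only [ne_eq, Submodule.orthogonal_eq_bot_iff]
      exact hWne
    obtain ⟨w, hwW, hw0⟩ := Submodule.ne_bot_iff _ |>.1 hWbot
    set u : EuclideanSpace ℝ (Fin n) := ‖w‖⁻¹ • w with hu
    have hu1 : ‖u‖ = 1 := by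
      rw [hu, norm_smul, norm_inv, norm_norm, inv_mul_cancel₀ (norm_ne_zero_iff.2 hw0)]
    have hau : ∀ p : ι, a p ∈ (Submodule.span ℝ {u})ᗮ := by
      intro p
      rw [Submodule.mem_orthogonal]
      intro x hx
      obtain ⟨c, rfl⟩ := Submodule.mem_span_singleton.1 hx
      have hwap : (inner ℝ (a p) w : ℝ) = 0 := hwW (a p) (hWa p)
      rw [hu, smul_smul, real_inner_smul_left, real_inner_comm, hwap]
      ring
    -- apply the shadow hypothesis
    obtain ⟨v, hv, hsub⟩ := h u hu1
    have hl : ∀ p : ι, ∃ lp ∈ L,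
        projHyp u lp = projHyp u (p : EuclideanSpace ℝ (Fin n)) + v := by
      intro p
      have hpQ : (p : EuclideanSpace ℝ (Fin n)) ∈ Q := by
        rw [hQs]; exact subset_convexHull ℝ _ p.2
      have hm : projHyp u (p : EuclideanSpace ℝ (Fin n)) + v ∈
          (fun x => x + v) '' (projHyp u '' Q) :=
        ⟨projHyp u (p : EuclideanSpace ℝ (Fin n)), Set.mem_image_of_mem _ hpQ, rfl⟩
      obtain ⟨lp, hlL, hleq⟩ := hsub hm
      exact ⟨lp, hlL, hleq⟩
    choose l hlL hlproj using hl
    set x : ι → EuclideanSpace ℝ (Fin n) :=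
      fun p => l p - (p : EuclideanSpace ℝ (Fin n)) with hx
    have hxT : x ∈ T := by
      intro p _
      rw [hCmem]
      have : (p : EuclideanSpace ℝ (Fin n)) + x p = l p := by
        rw [hx, add_sub_cancel]
      rw [this]
      exact hlL p
    have hfx : f x = 0 := by
      rw [hsum]
      have hterm : ∀ p : ι, (inner ℝ (a p) (x p) : ℝ) = inner ℝ (a p) v := by
        intro p
        rw [hx]
        simp only
        rw [inner_sub_right, inner_projHyp u (a p) (hau p) (l p),
          inner_projHyp u (a p) (hau p) (p : EuclideanSpace ℝ (Fin n)), hlproj p,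
          inner_add_right]
        ring
      rw [Finset.sum_congr rfl (fun p _ => hterm p)]
      rw [← sum_inner, ha0, inner_zero_left]
    have hcontr := hβ x hxT
    rw [hfx] at hcontr
    linarith
  obtain ⟨v₀, hv₀⟩ := key
  refine ⟨v₀, ?_⟩
  rintro y ⟨q, hq, rfl⟩
  rw [hQs] at hq
  have hsub : (s : Set (EuclideanSpace ℝ (Fin n))) ⊆
      {z : EuclideanSpace ℝ (Fin n) | z + v₀ ∈ L} := fun p hp => hv₀ p hp
  have hcv : Convex ℝ {z : EuclideanSpace ℝ (Fin n) | z + v₀ ∈ L} := by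
    have heq : {z : EuclideanSpace ℝ (Fin n) | z + v₀ ∈ L} =
        (fun z : EuclideanSpace ℝ (Fin n) => v₀ + z) ⁻¹' L := by
      ext z; simp [add_comm]
    rw [heq]
    exact hLcv.translate_preimage_right v₀
  exact convexHull_min hsub hcv hq
end

section
/- Let K and L be nonempty compact convex sets in ℝⁿ and let 2 ≤ d ≤ n-1. Suppose that for every d-dimensional linear subspace ξ of ℝⁿ there exists v ∈ ξ such that K_ξ + v ⊆ L_ξ, where K_ξ and L_ξ denote the orthogonal projections of K and L onto ξ. If K and L have the same diameter, then there exists v₀ ∈ ℝⁿ such that K + v₀ ⊆ L. -/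
open Set

/-- Any subspace of finrank `≤ d` is contained in a subspace of finrank exactly `d`. -/
lemma aux_exists_superset_finrank_eq {V : Type*} [AddCommGroup V] [Module ℝ V]
    [FiniteDimensional ℝ V] (d : ℕ) (W : Submodule ℝ V)
    (h1 : Module.finrank ℝ W ≤ d) (h2 : d ≤ Module.finrank ℝ V) :
    ∃ ξ : Submodule ℝ V, W ≤ ξ ∧ Module.finrank ℝ ξ = d := by
  induction d with
  | zero => exact ⟨W, le_rfl, Nat.le_antisymm h1 (Nat.zero_le _)⟩
  | succ d ih =>
    rcases Nat.lt_or_ge (Module.finrank ℝ W) (d + 1) with hlt | hge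
    · obtain ⟨ξ, hWξ, hξ⟩ := ih (Nat.lt_succ_iff.mp hlt) (le_trans (Nat.le_succ d) h2)
      have hξlt : Module.finrank ℝ ξ < Module.finrank ℝ V := by omega
      obtain ⟨m, hm⟩ := ξ.exists_of_finrank_lt hξlt
      have hmξ : m ∉ ξ := by simpa using hm 1 one_ne_zero
      have hm0 : m ≠ 0 := by
        rintro rfl; exact hmξ ξ.zero_mem
      refine ⟨ξ ⊔ Submodule.span ℝ {m}, le_trans hWξ le_sup_left, ?_⟩
      have hinf : ξ ⊓ Submodule.span ℝ {m} = ⊥ := by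
        rw [eq_bot_iff]
        rintro z ⟨hz1, hz2⟩
        obtain ⟨r, rfl⟩ := Submodule.mem_span_singleton.mp hz2
        rcases eq_or_ne r 0 with rfl | hr
        · simpa using Submodule.zero_mem ⊥
        · exact absurd hz1 (hm r hr)
      have := Submodule.finrank_sup_add_finrank_inf_eq ξ (Submodule.span ℝ {m})
      rw [hinf, finrank_bot, add_zero, hξ, finrank_span_singleton hm0] at this
      exact this
    · exact ⟨W, le_rfl, Nat.le_antisymm h1 hge⟩

set_option maxHeartbeats 1000000 in
open RealInnerProductSpace in
/-- Equal diameters plus d-shadow covering implies containment. -/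
theorem stmt_7 {n : ℕ} (hn : 2 ≤ n) (d : ℕ) (hd2 : 2 ≤ d) (hdn : d ≤ n - 1)
    (K L : Set (EuclideanSpace ℝ (Fin n)))
    (hKne : K.Nonempty) (hKcp : IsCompact K) (hKcv : Convex ℝ K)
    (hLne : L.Nonempty) (hLcp : IsCompact L) (hLcv : Convex ℝ L)
    (h : ∀ ξ : Submodule ℝ (EuclideanSpace ℝ (Fin n)), Module.finrank ℝ ξ = d →
      ∃ v ∈ ξ, (fun x => x + v) '' (projSub ξ '' K) ⊆ projSub ξ '' L)
    (hdiam : Metric.diam K = Metric.diam L) :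
    ∃ v₀ : EuclideanSpace ℝ (Fin n), (fun x => x + v₀) '' K ⊆ L := by
  classical
  obtain ⟨D, hD⟩ : ∃ D : ℝ, D = Metric.diam K := ⟨_, rfl⟩
  -- degenerate case : D = 0, K is a single point
  by_cases hD0 : D = 0
  · obtain ⟨a0, ha0⟩ := hKne
    obtain ⟨c0, hc0⟩ := hLne
    refine ⟨c0 - a0, ?_⟩
    rintro _ ⟨x, hx, rfl⟩
    have hxa : x = a0 := by
      have h1 : dist x a0 ≤ D := by
        rw [hD]; exact Metric.dist_le_diam_of_mem hKcp.isBounded hx ha0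
      rw [hD0] at h1
      exact dist_eq_zero.mp (le_antisymm h1 dist_nonneg)
    simp only [hxa]
    simpa using hc0
  have hDpos : 0 < D := lt_of_le_of_ne (by rw [hD]; exact Metric.diam_nonneg) (Ne.symm hD0)
  -- diametral pair of K
  obtain ⟨⟨a, b⟩, habK, hmax⟩ :=
    (hKcp.prod hKcp).exists_isMaxOn (hKne.prod hKne)
      (continuous_dist.continuousOn :
        ContinuousOn (fun p : EuclideanSpace ℝ (Fin n) × EuclideanSpace ℝ (Fin n) =>
          dist p.1 p.2) (K ×ˢ K))
  obtain ⟨haK, hbK⟩ := habK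
  have hab : dist a b = D := by
    rw [hD]
    refine le_antisymm (Metric.dist_le_diam_of_mem hKcp.isBounded haK hbK) ?_
    refine Metric.diam_le_of_forall_dist_le dist_nonneg fun x hx y hy => ?_
    exact isMaxOn_iff.mp hmax (x, y) (Set.mk_mem_prod hx hy)
  obtain ⟨u, hu⟩ : ∃ u : EuclideanSpace ℝ (Fin n), u = D⁻¹ • (a - b) := ⟨_, rfl⟩
  have hnab : ‖a - b‖ = D := by rw [← dist_eq_norm]; exact hab
  have hunorm : ‖u‖ = 1 := by
    rw [hu, norm_smul, hnab, norm_inv, Real.norm_eq_abs, abs_of_pos hDpos,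
      inv_mul_cancel₀ (ne_of_gt hDpos)]
  have hinner_ab : ⟪a - b, u⟫ = D := by
    rw [hu, real_inner_smul_right, real_inner_self_eq_norm_sq, hnab]
    field_simp
  have hinner_ab' : ⟪u, a - b⟫ = D := by rw [real_inner_comm]; exact hinner_ab
  -- support extrema of L in direction u
  have hcontu : Continuous fun y : EuclideanSpace ℝ (Fin n) => ⟪u, y⟫ :=
    continuous_const.inner continuous_id
  obtain ⟨c, hcL, hcmax⟩ := hLcp.exists_isMaxOn hLne hcontu.continuousOn
  obtain ⟨p, hpL, hpmin⟩ := hLcp.exists_isMinOn hLne hcontu.continuousOn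
  -- the translation vector
  refine ⟨c - a, ?_⟩
  rintro _ ⟨x, hxK, rfl⟩
  by_contra hz
  -- separating functional
  obtain ⟨f, s, hfs, hsz⟩ := geometric_hahn_banach_closed_point hLcv hLcp.isClosed hz
  obtain ⟨w, hw⟩ : ∃ w : EuclideanSpace ℝ (Fin n),
      w = (InnerProductSpace.toDual ℝ (EuclideanSpace ℝ (Fin n))).symm f := ⟨_, rfl⟩
  have hwf : ∀ z : EuclideanSpace ℝ (Fin n), ⟪w, z⟫ = f z := fun z => by
    rw [hw]; exact InnerProductSpace.toDual_symm_apply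
  -- a d-dimensional subspace containing u and w
  have hfr : Module.finrank ℝ (EuclideanSpace ℝ (Fin n)) = n := finrank_euclideanSpace_fin
  have hWle : Module.finrank ℝ ↥(Submodule.span ℝ {u} ⊔ Submodule.span ℝ {w}) ≤ d := by
    have h1 := Submodule.finrank_sup_add_finrank_inf_eq
      (Submodule.span ℝ ({u} : Set (EuclideanSpace ℝ (Fin n))))
      (Submodule.span ℝ ({w} : Set (EuclideanSpace ℝ (Fin n))))
    have hsing : ∀ z : EuclideanSpace ℝ (Fin n),
        Module.finrank ℝ (Submodule.span ℝ ({z} : Set (EuclideanSpace ℝ (Fin n)))) ≤ 1 := by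
      intro z
      rcases eq_or_ne z 0 with rfl | hz
      · rw [Submodule.span_zero_singleton]
        simp [finrank_bot]
      · rw [finrank_span_singleton hz]
    have h2 := hsing u
    have h3 := hsing w
    omega
  obtain ⟨ξ, hWξ, hξd⟩ := aux_exists_superset_finrank_eq d _ hWle (by rw [hfr]; omega)
  have huξ : u ∈ ξ := hWξ (Submodule.mem_sup_left (Submodule.mem_span_singleton_self u))
  have hwξ : w ∈ ξ := hWξ (Submodule.mem_sup_right (Submodule.mem_span_singleton_self w))
  obtain ⟨v, hvξ, hsub⟩ := h ξ hξd
  -- projections respect inner products with members of ξ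
  have haux : ∀ g ∈ ξ, ∀ z : EuclideanSpace ℝ (Fin n), ⟪g, projSub ξ z⟫ = ⟪g, z⟫ := by
    intro g hg z
    have h' : ⟪z - projSub ξ z, g⟫ = 0 := ξ.starProjection_inner_eq_zero z g hg
    rw [inner_sub_left, sub_eq_zero] at h'
    rw [real_inner_comm, ← h', real_inner_comm]
  -- shadow covering gives, for each point of K, a point of L with matching projection
  have hproj : ∀ q ∈ K, ∃ y ∈ L, projSub ξ y = projSub ξ q + v := by
    intro q hq
    obtain ⟨y, hyL, hy⟩ := hsub ⟨projSub ξ q, ⟨q, hq, rfl⟩, rfl⟩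
    exact ⟨y, hyL, by simpa using hy⟩
  obtain ⟨ya, hyaL, hya⟩ := hproj a haK
  obtain ⟨yb, hybL, hyb⟩ := hproj b hbK
  obtain ⟨yx, hyxL, hyx⟩ := hproj x hxK
  have hinner_proj : ∀ y q : EuclideanSpace ℝ (Fin n), projSub ξ y = projSub ξ q + v →
      ∀ g ∈ ξ, ⟪g, y⟫ = ⟪g, q⟫ + ⟪g, v⟫ := by
    intro y q hyq g hg
    rw [← haux g hg y, hyq, inner_add_right, haux g hg q]
  have hua : ⟪u, ya⟫ = ⟪u, a⟫ + ⟪u, v⟫ := hinner_proj ya a hya u huξ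
  have hub : ⟪u, yb⟫ = ⟪u, b⟫ + ⟪u, v⟫ := hinner_proj yb b hyb u huξ
  -- key forcing lemma
  have hforce : ∀ y q : EuclideanSpace ℝ (Fin n),
      ⟪u, y - q⟫ = D → ‖y - q‖ ≤ D → y - q = D • u := by
    intro y q h1 h2
    have hexp : ‖(y - q) - D • u‖ ^ 2 = ‖y - q‖ ^ 2 - 2 * (D * D) + D ^ 2 := by
      rw [norm_sub_sq_real, real_inner_smul_right, real_inner_comm, h1,
        norm_smul, Real.norm_eq_abs, abs_of_pos hDpos, hunorm]
      ring
    have h0 : ‖(y - q) - D • u‖ = 0 := by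
      nlinarith [norm_nonneg ((y - q) - D • u), norm_nonneg (y - q)]
    rw [norm_eq_zero, sub_eq_zero] at h0
    exact h0
  -- inner products with u of points of L are pinned between p and c
  have hcya : ⟪u, ya⟫ ≤ ⟪u, c⟫ := hcmax hyaL
  have hpyb : ⟪u, p⟫ ≤ ⟪u, yb⟫ := hpmin hybL
  have hdistcp : ‖c - p‖ ≤ D := by
    rw [← dist_eq_norm, hD, hdiam]
    exact Metric.dist_le_diam_of_mem hLcp.isBounded hcL hpL
  have hdistyap : ‖ya - p‖ ≤ D := by
    rw [← dist_eq_norm, hD, hdiam]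
    exact Metric.dist_le_diam_of_mem hLcp.isBounded hyaL hpL
  have hcp_le : ⟪u, c - p⟫ ≤ D := by
    calc ⟪u, c - p⟫ ≤ ‖u‖ * ‖c - p‖ := real_inner_le_norm u (c - p)
    _ ≤ D := by rw [hunorm, one_mul]; exact hdistcp
  have hab_inner : ⟪u, a⟫ - ⟪u, b⟫ = D := by
    rw [← inner_sub_right]; exact hinner_ab'
  have hcp_ge : D ≤ ⟪u, c - p⟫ := by
    rw [inner_sub_right]
    linarith
  have hcp_eq : ⟪u, c - p⟫ = D := le_antisymm hcp_le hcp_ge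
  have hya_eq_c_inner : ⟪u, ya⟫ = ⟪u, c⟫ := by
    rw [inner_sub_right] at hcp_eq
    linarith
  have hyap_inner : ⟪u, ya - p⟫ = D := by
    rw [inner_sub_right] at hcp_eq ⊢
    rw [hya_eq_c_inner]
    linarith
  have h1 : ya - p = D • u := hforce ya p hyap_inner hdistyap
  have h2 : c - p = D • u := hforce c p hcp_eq hdistcp
  have hya_eq_c : ya = c := sub_left_injective (h1.trans h2.symm)
  -- hence v is the projection of c - a
  have hv : projSub ξ c = projSub ξ a + v := by rw [← hya_eq_c]; exact hya
  -- the projection of x + (c - a) agrees with that of yx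
  have hproj_yx : projSub ξ yx = projSub ξ (x + (c - a)) := by
    rw [hyx]
    simp only [projSub, map_add, map_sub, Submodule.coe_add, Submodule.coe_sub]
    have hv' : (ξ.orthogonalProjection c : EuclideanSpace ℝ (Fin n)) =
        (ξ.orthogonalProjection a : EuclideanSpace ℝ (Fin n)) + v := hv
    rw [hv']
    abel
  -- contradiction via the separating functional
  have hwyx : ⟪w, yx⟫ = ⟪w, x + (c - a)⟫ := by
    rw [← haux w hwξ yx, hproj_yx, haux w hwξ]
  have hlt1 : f yx < s := hfs yx hyxL
  have hlt2 : s < f (x + (c - a)) := hsz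
  linarith [hwf yx, hwf (x + (c - a)), hwyx]
end

section
/- Let K and L be nonempty compact convex sets in ℝⁿ and let ψ : ℝⁿ → ℝⁿ be a nonsingular (invertible) linear transformation. Then the following are equivalent: (i) for every unit vector u ∈ ℝⁿ there exists v ∈ u^⊥ with K_u + v ⊆ L_u; (ii) for every unit vector u ∈ ℝⁿ there exists w ∈ u^⊥ with (ψK)_u + w ⊆ (ψL)_u. Here S_u denotes the orthogonal projection of S onto the hyperplane u^⊥, and ψS = {ψ(x) : x ∈ S}. -/
open Set

/-- The set of exposed points of `K`: points that are the unique maximizer in `K`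
of the inner product with some unit vector. -/
def exposedPts {n : ℕ} (K : Set (EuclideanSpace ℝ (Fin n))) :
    Set (EuclideanSpace ℝ (Fin n)) :=
  {x | x ∈ K ∧ ∃ u : EuclideanSpace ℝ (Fin n), ‖u‖ = 1 ∧
    {y ∈ K | ∀ z ∈ K, (inner ℝ z u : ℝ) ≤ (inner ℝ y u : ℝ)} = {x}}

lemma projHyp_add {n : ℕ} (u a b : EuclideanSpace ℝ (Fin n)) :
    projHyp u (a + b) = projHyp u a + projHyp u b := by
  simp [projHyp, projSub]

lemma projHyp_mem {n : ℕ} (u x : EuclideanSpace ℝ (Fin n)) :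
    projHyp u x ∈ (Submodule.span ℝ {u})ᗮ := (Submodule.orthogonalProjection _ x).2

lemma sub_projHyp_mem {n : ℕ} (u x : EuclideanSpace ℝ (Fin n)) :
    x - projHyp u x ∈ Submodule.span ℝ {u} := by
  have h := Submodule.sub_starProjection_mem_orthogonal (K := (Submodule.span ℝ ({u} : Set _))ᗮ) x
  rwa [Submodule.orthogonal_orthogonal] at h

lemma projHyp_of_mem_span {n : ℕ} {u x : EuclideanSpace ℝ (Fin n)}
    (hx : x ∈ Submodule.span ℝ {u}) : projHyp u x = 0 := by
  have : x ∈ ((Submodule.span ℝ ({u} : Set _))ᗮ)ᗮ := by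
    rwa [Submodule.orthogonal_orthogonal]
  simpa [projHyp, projSub] using
    congrArg (Subtype.val) (Submodule.orthogonalProjectionOnto_apply_of_mem_orthogonal this)

lemma key {n : ℕ} (u : EuclideanSpace ℝ (Fin n)) (K L : Set (EuclideanSpace ℝ (Fin n))) :
    (∃ v ∈ (Submodule.span ℝ {u})ᗮ,
        (fun x => x + v) '' (projHyp u '' K) ⊆ projHyp u '' L) ↔
    (∃ v : EuclideanSpace ℝ (Fin n), ∀ k ∈ K, ∃ l ∈ L, ∃ t : ℝ, k + v = l + t • u) := by
  constructor
  · rintro ⟨v, hv, hsub⟩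
    refine ⟨v, fun k hk => ?_⟩
    obtain ⟨l, hl, hlk⟩ := hsub ⟨projHyp u k, ⟨k, hk, rfl⟩, rfl⟩
    have hmem : (k + v) - l ∈ Submodule.span ℝ {u} := by
      have h1 := sub_projHyp_mem u k
      have h2 := sub_projHyp_mem u l
      have : (k + v) - l = (k - projHyp u k) - (l - projHyp u l) + (projHyp u k + v - projHyp u l) := by
        abel
      have hz : projHyp u k + v - projHyp u l = 0 := by rw [hlk]; beta_reduce; abel
      rw [this, hz, add_zero]
      exact Submodule.sub_mem _ h1 h2
    obtain ⟨t, ht⟩ := Submodule.mem_span_singleton.1 hmem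
    exact ⟨l, hl, t, by rw [ht]; abel⟩
  · rintro ⟨v, hv⟩
    refine ⟨projHyp u v, projHyp_mem u v, ?_⟩
    rintro _ ⟨_, ⟨k, hk, rfl⟩, rfl⟩
    obtain ⟨l, hl, t, ht⟩ := hv k hk
    refine ⟨l, hl, ?_⟩
    have : projHyp u (k + v) = projHyp u (l + t • u) := by rw [ht]
    rw [projHyp_add, projHyp_add, projHyp_of_mem_span
      (Submodule.smul_mem _ t (Submodule.mem_span_singleton_self u)), add_zero] at this
    exact this.symm

lemma transfer {n : ℕ} (K L : Set (EuclideanSpace ℝ (Fin n)))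
    (ψ : EuclideanSpace ℝ (Fin n) →ₗ[ℝ] EuclideanSpace ℝ (Fin n))
    (hψ : Function.Bijective ψ)
    (h : ∀ u : EuclideanSpace ℝ (Fin n), ‖u‖ = 1 →
      ∃ v : EuclideanSpace ℝ (Fin n), ∀ k ∈ K, ∃ l ∈ L, ∃ t : ℝ, k + v = l + t • u) :
    ∀ u : EuclideanSpace ℝ (Fin n), ‖u‖ = 1 →
      ∃ v : EuclideanSpace ℝ (Fin n), ∀ k ∈ ψ '' K, ∃ l ∈ ψ '' L, ∃ t : ℝ, k + v = l + t • u := by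
  intro u' hu'
  set e := LinearEquiv.ofBijective ψ hψ with he
  have hw0 : e.symm u' ≠ 0 := by
    intro h0
    have : u' = 0 := by
      have := congrArg e h0
      simpa using this
    simp [this] at hu'
  set w := e.symm u'
  have hun : ‖(‖w‖⁻¹ : ℝ) • w‖ = 1 := norm_smul_inv_norm hw0
  obtain ⟨v, hv⟩ := h (‖w‖⁻¹ • w) hun
  refine ⟨ψ v, ?_⟩
  rintro _ ⟨k, hk, rfl⟩
  obtain ⟨l, hl, t, ht⟩ := hv k hk
  refine ⟨ψ l, ⟨l, hl, rfl⟩, t * ‖w‖⁻¹, ?_⟩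
  have := congrArg ψ ht
  have hψw : ψ w = u' := e.apply_symm_apply u'
  rw [map_add, map_add, map_smul, map_smul, hψw] at this
  rw [this, smul_smul]

/-- Shadow covering in every direction is invariant under nonsingular linear maps. -/
theorem stmt_18 {n : ℕ} (hn : 1 ≤ n) (K L : Set (EuclideanSpace ℝ (Fin n)))
    (hKne : K.Nonempty) (hKcp : IsCompact K) (hKcv : Convex ℝ K)
    (hLne : L.Nonempty) (hLcp : IsCompact L) (hLcv : Convex ℝ L)
    (ψ : EuclideanSpace ℝ (Fin n) →ₗ[ℝ] EuclideanSpace ℝ (Fin n))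
    (hψ : Function.Bijective ψ) :
    (∀ u : EuclideanSpace ℝ (Fin n), ‖u‖ = 1 →
      ∃ v ∈ (Submodule.span ℝ {u})ᗮ,
        (fun x => x + v) '' (projHyp u '' K) ⊆ projHyp u '' L) ↔
    (∀ u : EuclideanSpace ℝ (Fin n), ‖u‖ = 1 →
      ∃ w ∈ (Submodule.span ℝ {u})ᗮ,
        (fun x => x + w) '' (projHyp u '' (ψ '' K)) ⊆ projHyp u '' (ψ '' L)) := by
  set e := LinearEquiv.ofBijective ψ hψ with he
  constructor
  · intro h u hu
    rw [key]
    exact transfer K L ψ hψ (fun u hu => (key u K L).1 (h u hu)) u hu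
  · intro h u hu
    rw [key]
    have h' := transfer (ψ '' K) (ψ '' L) e.symm.toLinearMap e.symm.bijective
      (fun u hu => (key u _ _).1 (h u hu))
    have hKK : e.symm.toLinearMap '' (ψ '' K) = K := by
      rw [Set.image_image]
      have : ∀ x, e.symm (ψ x) = x := fun x => e.symm_apply_apply x
      simp [this]
    have hLL : e.symm.toLinearMap '' (ψ '' L) = L := by
      rw [Set.image_image]
      have : ∀ x, e.symm (ψ x) = x := fun x => e.symm_apply_apply x
      simp [this]
    rw [hKK, hLL] at h'
    exact h' u hu
end
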